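/- Fix g₀, u₀ > 0, μ ≥ 0, and let u(·; γ) solve u u_g + μ u + sin g - γ = 0 with u(g₀) = u₀ > 0. If γ₁ > γ₂ then u(g; γ₁) > u(g; γ₂) for all g > g₀ in the common domain where both are positive. -/
import Mathlib

open Set Filter Topology

theorem stmt13 (g₀ u₀ μ G₁ G₂ : ℝ) (hu₀ : 0 < u₀) (hμ : 0 ≤ μ)
    (γ₁ γ₂ : ℝ) (hγ : γ₂ < γ₁)
    (u₁ u₂ u₁' u₂' : ℝ → ℝ)
    (h₁ : ∀ g ∈ Set.Ico g₀ G₁, HasDerivAt u₁ (u₁' g) g ∧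
      u₁ g * u₁' g + μ * u₁ g + Real.sin g - γ₁ = 0 ∧ 0 < u₁ g)
    (h₂ : ∀ g ∈ Set.Ico g₀ G₂, HasDerivAt u₂ (u₂' g) g ∧
      u₂ g * u₂' g + μ * u₂ g + Real.sin g - γ₂ = 0 ∧ 0 < u₂ g)
    (hi₁ : u₁ g₀ = u₀) (hi₂ : u₂ g₀ = u₀) :
    ∀ g : ℝ, g₀ < g → g < G₁ → g < G₂ → u₂ g < u₁ g := by
  intro g hg hG₁ hG₂
  by_contra hcon
  push_neg at hcon
  set f : ℝ → ℝ := fun t => u₁ t ^ 2 - u₂ t ^ 2 with hfdef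
  have hmem : ∀ t ∈ Icc g₀ g, t ∈ Ico g₀ G₁ ∧ t ∈ Ico g₀ G₂ := fun t ht =>
    ⟨⟨ht.1, lt_of_le_of_lt ht.2 hG₁⟩, ⟨ht.1, lt_of_le_of_lt ht.2 hG₂⟩⟩
  have hderiv : ∀ t ∈ Icc g₀ g,
      HasDerivAt f (2 * u₁ t ^ 1 * u₁' t - 2 * u₂ t ^ 1 * u₂' t) t := by
    intro t ht
    have h1 := (h₁ t (hmem t ht).1).1
    have h2 := (h₂ t (hmem t ht).2).1
    exact ((h1.pow 2).sub (h2.pow 2))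
  have hsign : ∀ t ∈ Icc g₀ g, f t ≤ 0 →
      0 < 2 * u₁ t ^ 1 * u₁' t - 2 * u₂ t ^ 1 * u₂' t := by
    intro t ht hft
    simp only [hfdef] at hft
    obtain ⟨_, he1, hp1⟩ := h₁ t (hmem t ht).1
    obtain ⟨_, he2, hp2⟩ := h₂ t (hmem t ht).2
    have hle : u₁ t ≤ u₂ t := by nlinarith [mul_pos hp1 hp2]
    have hm : μ * u₁ t ≤ μ * u₂ t := mul_le_mul_of_nonneg_left hle hμ
    nlinarith
  have hcont : ContinuousOn f (Icc g₀ g) := fun t ht =>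
    ((hderiv t ht).continuousAt).continuousWithinAt
  obtain ⟨c, hc, hcmin⟩ :=
    isCompact_Icc.exists_isMinOn (nonempty_Icc.mpr hg.le) hcont
  have hgmem : g ∈ Icc g₀ g := ⟨hg.le, le_refl g⟩
  have hfg : f g ≤ 0 := by
    have hp1 := (h₁ g (hmem g hgmem).1).2.2
    simp only [hfdef]
    nlinarith
  have hfc : f c ≤ f g := hcmin hgmem
  have hf0 : f g₀ = 0 := by simp [hfdef, hi₁, hi₂]
  -- produce a min point d with g₀ < d
  obtain ⟨d, hd, hdmin⟩ : ∃ d, d ∈ Ioc g₀ g ∧ IsMinOn f (Icc g₀ g) d := by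
    rcases eq_or_lt_of_le hfc with h | h
    · exact ⟨g, ⟨hg, le_refl g⟩, fun x hx => h ▸ hcmin hx⟩
    · refine ⟨c, ⟨?_, hc.2⟩, hcmin⟩
      rcases eq_or_lt_of_le hc.1 with h' | h'
      · exfalso; rw [← h', hf0] at h; linarith
      · exact h'
  have hdIcc : d ∈ Icc g₀ g := ⟨hd.1.le, hd.2⟩
  have hfd : f d ≤ 0 := le_trans (hdmin hgmem) hfg
  have hDpos := hsign d hdIcc hfd
  have hslope := hasDerivAt_iff_tendsto_slope.mp (hderiv d hdIcc)
  have hslope' : Filter.Tendsto (slope f d) (𝓝[<] d)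
      (𝓝 (2 * u₁ d ^ 1 * u₁' d - 2 * u₂ d ^ 1 * u₂' d)) :=
    hslope.mono_left (nhdsWithin_mono d fun x hx => ne_of_lt hx)
  have hev1 : ∀ᶠ s in 𝓝[<] d, 0 < slope f d s :=
    hslope'.eventually (eventually_gt_nhds hDpos)
  have hev2 : ∀ᶠ s in 𝓝[<] d, s ∈ Ioo g₀ d :=
    Ioo_mem_nhdsLT_of_mem ⟨hd.1, le_refl d⟩
  obtain ⟨s, hs1, hs2⟩ := (hev1.and hev2).exists
  have hsIcc : s ∈ Icc g₀ g := ⟨hs2.1.le, le_trans hs2.2.le hd.2⟩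
  have hmin_s : f d ≤ f s := hdmin hsIcc
  rw [slope_def_field] at hs1
  have hneg : s - d < 0 := sub_neg.mpr hs2.2
  have : (f s - f d) / (s - d) ≤ 0 :=
    div_nonpos_of_nonneg_of_nonpos (sub_nonneg.mpr hmin_s) hneg.le
  linarith
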